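/- Let {P_α}_{α=1,…,d²} be a linearly independent family of Hermitian positive semidefinite d×d complex matrices with Σ_α P_α = 1_d, such that Tr(P_α²) = a for all α and Tr(P_α P_β) = c for all α ≠ β (a general SIC-POVM). Then Tr(P_α) = 1/d for all α, c = (1 − a d)/(d(d² − 1)), a d³ > 1, and the matrices Q_α := (d/(a d³ − 1))·[(d² − 1)·P_α − (1 − a d)·1_d] satisfy the biorthogonality relation Tr(P_α Q_β) = δ_{αβ}; consequently {Q_α} is the dual frame of {P_α}. -/

import Mathlib

open Matrix
open scoped ComplexOrder

lemma trace_conjTranspose_mul_self_real {n : Type*} [Fintype n] (M : Matrix n n ℂ) :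
    Matrix.trace (Mᴴ * M) = ((∑ i, ∑ j, Complex.normSq (M j i) : ℝ) : ℂ) := by
  simp only [Matrix.trace, Matrix.diag, Matrix.mul_apply, Matrix.conjTranspose_apply]
  push_cast
  congr 1; ext i; congr 1; ext j
  rw [Complex.star_def, ← Complex.normSq_eq_conj_mul_self]

lemma pos_of_trace_eq {n : Type*} [Fintype n] {M : Matrix n n ℂ} {r : ℝ}
    (h : Matrix.trace (Mᴴ * M) = (r : ℂ)) (hM : M ≠ 0) : 0 < r := by
  rw [trace_conjTranspose_mul_self_real] at h
  have hr : r = ∑ i, ∑ j, Complex.normSq (M j i) := by exact_mod_cast h.symm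
  obtain ⟨j, i, hij⟩ : ∃ j i, M j i ≠ 0 := by
    by_contra hcon; push_neg at hcon
    exact hM (Matrix.ext fun j i => hcon j i)
  rw [hr]
  have h0 : 0 < Complex.normSq (M j i) := Complex.normSq_pos.2 hij
  have h1 : 0 < ∑ k, Complex.normSq (M k i) :=
    Finset.sum_pos' (fun k _ => Complex.normSq_nonneg _) ⟨j, Finset.mem_univ _, h0⟩
  exact Finset.sum_pos' (fun i _ => Finset.sum_nonneg fun k _ => Complex.normSq_nonneg _)
    ⟨i, Finset.mem_univ _, h1⟩

theorem sic_povm_dual_frame {d : ℕ} (hd : 2 ≤ d)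
    (P : Fin (d ^ 2) → Matrix (Fin d) (Fin d) ℂ)
    (hPlin : LinearIndependent ℝ P)
    (hPpos : ∀ α, (P α).PosSemidef)
    (hPsum : ∑ α, P α = (1 : Matrix (Fin d) (Fin d) ℂ))
    (a c : ℝ)
    (ha : ∀ α, Matrix.trace (P α * P α) = (a : ℂ))
    (hc : ∀ α β, α ≠ β → Matrix.trace (P α * P β) = (c : ℂ)) :
    (∀ α, Matrix.trace (P α) = ((1 / d : ℝ) : ℂ)) ∧
    c = (1 - a * d) / (d * ((d : ℝ) ^ 2 - 1)) ∧
    1 < a * (d : ℝ) ^ 3 ∧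
    (∀ α β, Matrix.trace (P α *
        (((d : ℝ) / (a * (d : ℝ) ^ 3 - 1)) •
          ((((d : ℝ) ^ 2 - 1) • P β) -
            ((1 - a * (d : ℝ)) • (1 : Matrix (Fin d) (Fin d) ℂ)))))
      = if α = β then 1 else 0) := by
  have hd2r : (2 : ℝ) ≤ (d : ℝ) := by exact_mod_cast hd
  have hd0 : (d : ℝ) ≠ 0 := by linarith
  have hdsq : (d : ℝ) ^ 2 - 1 ≠ 0 := by nlinarith
  -- Step 1: trace of each P α
  have htr : ∀ α, Matrix.trace (P α) = (a : ℂ) + ((d : ℂ) ^ 2 - 1) * (c : ℂ) := by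
    intro α
    calc Matrix.trace (P α) = Matrix.trace (P α * ∑ β, P β) := by rw [hPsum, mul_one]
      _ = ∑ β, Matrix.trace (P α * P β) := by rw [Finset.mul_sum, Matrix.trace_sum]
      _ = ∑ β, ((c : ℂ) + if β = α then (a : ℂ) - c else 0) :=
          Finset.sum_congr rfl fun β _ => by
            by_cases h : β = α
            · subst h; rw [ha]; simp
            · rw [hc α β (Ne.symm h)]; simp [h]
      _ = (a : ℂ) + ((d : ℂ) ^ 2 - 1) * c := by
          rw [Finset.sum_add_distrib, Finset.sum_const,
            Finset.sum_ite_eq' Finset.univ α fun _ => (a : ℂ) - c]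
          simp [Finset.card_univ]
          push_cast
          ring
  -- Step 2: sum identity
  have hre : (d : ℝ) ^ 2 * (a + ((d : ℝ) ^ 2 - 1) * c) = (d : ℝ) := by
    have h1 : ∑ α, Matrix.trace (P α) = Matrix.trace (1 : Matrix (Fin d) (Fin d) ℂ) := by
      rw [← Matrix.trace_sum, hPsum]
    rw [Matrix.trace_one] at h1
    simp only [htr, Finset.sum_const, Finset.card_univ, Fintype.card_fin, nsmul_eq_mul] at h1
    have h2 : ((d : ℂ) ^ 2) * ((a : ℂ) + ((d : ℂ) ^ 2 - 1) * c) = (d : ℂ) := by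
      push_cast at h1 ⊢
      convert h1 using 2 <;> push_cast <;> ring_nf
    exact_mod_cast h2
  have hTd : (a + ((d : ℝ) ^ 2 - 1) * c) * (d : ℝ) = 1 := by
    have h' : (d : ℝ) * ((a + ((d : ℝ) ^ 2 - 1) * c) * (d : ℝ)) = (d : ℝ) * 1 := by
      linear_combination hre
    exact mul_left_cancel₀ hd0 h'
  have hT : a + ((d : ℝ) ^ 2 - 1) * c = 1 / (d : ℝ) := by
    rw [eq_div_iff hd0]; exact hTd
  have htrace : ∀ α, Matrix.trace (P α) = ((1 / d : ℝ) : ℂ) := by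
    intro α
    rw [htr α]
    exact_mod_cast congrArg (Complex.ofReal) hT
  -- Step 3: value of c
  have hcval : c = (1 - a * d) / (d * ((d : ℝ) ^ 2 - 1)) := by
    rw [eq_div_iff (mul_ne_zero hd0 hdsq)]
    linear_combination hTd
  -- Step 4: a d^3 > 1
  have hdpos : 0 < d ^ 2 := pow_pos (by omega) 2
  set α0 : Fin (d ^ 2) := ⟨0, hdpos⟩ with hα0
  set M : Matrix (Fin d) (Fin d) ℂ := P α0 - ((d : ℂ) ^ 2)⁻¹ • 1 with hM
  have hherm : Mᴴ = M := by
    have h1 : (P α0)ᴴ = P α0 := (hPpos α0).isHermitian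
    simp [hM, Matrix.conjTranspose_sub, Matrix.conjTranspose_smul, h1, star_inv₀, star_pow,
      Complex.star_def, Complex.conj_natCast]
  have htrM : Matrix.trace (Mᴴ * M) = ((a - 1 / (d : ℝ) ^ 3 : ℝ) : ℂ) := by
    rw [hherm]
    have hexp : M * M = P α0 * P α0 - ((d : ℂ) ^ 2)⁻¹ • P α0 - ((d : ℂ) ^ 2)⁻¹ • P α0
        + (((d : ℂ) ^ 2)⁻¹ * ((d : ℂ) ^ 2)⁻¹) • 1 := by
      simp only [hM, sub_mul, mul_sub, smul_mul_assoc, mul_smul_comm, one_mul, mul_one, smul_smul,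
        smul_sub]
      abel
    rw [hexp]
    simp only [Matrix.trace_add, Matrix.trace_sub, Matrix.trace_smul, Matrix.trace_one,
      ha α0, htrace α0, Fintype.card_fin, smul_eq_mul]
    have hdc : (d : ℂ) ≠ 0 := by exact_mod_cast (Nat.cast_ne_zero (R := ℂ)).2 (by omega)
    push_cast
    field_simp
    ring
  have hMne : M ≠ 0 := by
    intro hM0
    have hPeq : P α0 = ((d : ℂ) ^ 2)⁻¹ • 1 := by
      rw [hM, sub_eq_zero] at hM0; exact hM0
    have hzero : ∑ β, (if β = α0 then 1 - ((d : ℝ) ^ 2)⁻¹ else -((d : ℝ) ^ 2)⁻¹) • P β = 0 := by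
      have hsplit : ∀ β : Fin (d ^ 2),
          (if β = α0 then 1 - ((d : ℝ) ^ 2)⁻¹ else -((d : ℝ) ^ 2)⁻¹) • P β
          = (if β = α0 then P β else 0) - ((d : ℝ) ^ 2)⁻¹ • P β := by
        intro β
        by_cases h : β = α0 <;> simp [h, sub_smul, one_smul] <;> module
      rw [Finset.sum_congr rfl fun β _ => hsplit β, Finset.sum_sub_distrib,
        Finset.sum_ite_eq' Finset.univ α0, ← Finset.smul_sum, hPsum, if_pos (Finset.mem_univ _),
        hPeq]
      have hsmul : ((d : ℝ) ^ 2)⁻¹ • (1 : Matrix (Fin d) (Fin d) ℂ)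
          = ((d : ℂ) ^ 2)⁻¹ • (1 : Matrix (Fin d) (Fin d) ℂ) := by
        ext i j
        simp only [Matrix.smul_apply, Complex.real_smul, smul_eq_mul]
        push_cast
        ring
      rw [hsmul, sub_self]
    have hthis := Fintype.linearIndependent_iff.mp hPlin _ hzero α0
    have h5 : 1 - ((d : ℝ) ^ 2)⁻¹ = 0 := by simpa using hthis
    have h6 : ((d : ℝ) ^ 2)⁻¹ ≤ 1/4 := by
      rw [inv_le_comm₀ (by nlinarith) (by norm_num)]
      nlinarith
    linarith
  have hpos : 0 < a - 1 / (d : ℝ) ^ 3 := pos_of_trace_eq htrM hMne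
  have h3 : (0 : ℝ) < (d : ℝ) ^ 3 := by positivity
  have hkey : 0 < a * (d : ℝ) ^ 3 - 1 := by
    have hh : a * (d : ℝ) ^ 3 - 1 = (a - 1 / (d : ℝ) ^ 3) * (d : ℝ) ^ 3 := by
      field_simp
    rw [hh]; exact mul_pos hpos h3
  have had3 : 1 < a * (d : ℝ) ^ 3 := by linarith
  refine ⟨htrace, hcval, had3, ?_⟩
  -- Step 5: biorthogonality
  have had1 : a * (d : ℝ) ^ 3 - 1 ≠ 0 := ne_of_gt hkey
  intro α β
  rw [Matrix.mul_smul, Matrix.trace_smul, Matrix.mul_sub, Matrix.trace_sub, Matrix.mul_smul,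
    Matrix.trace_smul, Matrix.mul_smul, Matrix.trace_smul, Matrix.mul_one, htrace α]
  by_cases h : α = β
  · subst h
    rw [ha α, if_pos rfl]
    have hre2 : (d : ℝ) / (a * (d : ℝ) ^ 3 - 1) *
        (((d : ℝ) ^ 2 - 1) * a - (1 - a * (d : ℝ)) * (1 / (d : ℝ))) = 1 := by
      rw [div_mul_eq_mul_div, div_eq_one_iff_eq had1]
      linear_combination (-(1 - a * (d : ℝ))) * mul_one_div_cancel hd0
    simp only [smul_eq_mul, Complex.real_smul]
    exact_mod_cast congrArg (Complex.ofReal) hre2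
  · rw [hc α β h, if_neg h]
    have hre3 : (d : ℝ) / (a * (d : ℝ) ^ 3 - 1) *
        (((d : ℝ) ^ 2 - 1) * c - (1 - a * (d : ℝ)) * (1 / (d : ℝ))) = 0 := by
      rw [hcval]
      field_simp
      ring
    simp only [smul_eq_mul, Complex.real_smul]
    exact_mod_cast congrArg (Complex.ofReal) hre3
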